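/- Let (x, z, y) be a vertex solution (extreme point) of the polytope P = LP_RRMB(E_X, I_X, E_Y, I_Y, E_Z, L) such that x_e > 0 for every e ∈ E_X, y_e > 0 for every e ∈ E_Y, and z_e > 0 for every e ∈ E_Z. Then there exist nonempty chain families L(x) ⊆ F(x) and L(y) ⊆ F(y) and subsets E(x,z) ⊆ E(x,z)* and E(z,y) ⊆ E(z,y)* such that: (i) |E_X| + |E_Z| + |E_Y| = |L(x)| + |E(x,z)| + |E(z,y)| + |L(y)| + 1; and (ii) the vectors in {χ_X(U) : U ∈ L(x)} ∪ {χ_Y(U) : U ∈ L(y)} ∪ {−χ_X({e}) + χ_Z({e}) : e ∈ E(x,z)} ∪ {χ_Z({e}) − χ_Y({e}) : e ∈ E(z,y)} ∪ {χ_Z(E_Z)} are linearly independent. -/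

import Mathlib

open Finset

/-- A matroid `M = (E, I)` on a finite ground set, given by its finite ground set and
the family of independent sets. -/
structure FinMatroid (α : Type*) [DecidableEq α] where
  /-- the ground set -/
  E : Finset α
  /-- the independence predicate -/
  Indep : Finset α → Prop
  indep_subset_ground : ∀ ⦃A⦄, Indep A → A ⊆ E
  indep_empty : Indep ∅
  indep_subset : ∀ ⦃A B⦄, A ⊆ B → Indep B → Indep A
  indep_exchange : ∀ ⦃A B⦄, Indep A → Indep B → A.card < B.card →
    ∃ e ∈ B \ A, Indep (insert e A)

open scoped Classical in
/-- The rank function of a matroid: `r_M(U) = max {|W| : W ⊆ U, W ∈ I}`. -/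
noncomputable def FinMatroid.rank {α : Type*} [DecidableEq α]
    (M : FinMatroid α) (U : Finset α) : ℕ :=
  ((U.powerset.filter fun W => M.Indep W).image Finset.card).max'
    ⟨0, Finset.mem_image.2 ⟨∅, Finset.mem_filter.2
      ⟨Finset.mem_powerset.2 (Finset.empty_subset U), M.indep_empty⟩,
      Finset.card_empty⟩⟩

/-- The feasible region of the linear program `LP_RRMB(E_X, I_X, E_Y, I_Y, E_Z, L)`,
viewed inside `ℝ^{E_X} × ℝ^{E_Z} × ℝ^{E_Y}` (coordinates outside the respective
ground sets are fixed to `0`). -/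
noncomputable def LP_RRMB {α : Type*} [DecidableEq α]
    (MX MY : FinMatroid α) (EZ : Finset α) (L : ℕ) :
    Set ((α → ℝ) × (α → ℝ) × (α → ℝ)) :=
  {q | (∀ e, 0 ≤ q.1 e) ∧ (∀ e, 0 ≤ q.2.1 e) ∧ (∀ e, 0 ≤ q.2.2 e) ∧
       (∀ e ∉ MX.E, q.1 e = 0) ∧ (∀ e ∉ EZ, q.2.1 e = 0) ∧ (∀ e ∉ MY.E, q.2.2 e = 0) ∧
       (∑ e ∈ MX.E, q.1 e = (MX.rank MX.E : ℝ)) ∧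
       (∀ U : Finset α, U ⊂ MX.E → ∑ e ∈ U, q.1 e ≤ (MX.rank U : ℝ)) ∧
       (∀ e ∈ MX.E ∩ EZ, q.2.1 e ≤ q.1 e) ∧
       (∑ e ∈ EZ, q.2.1 e = (L : ℝ)) ∧
       (∀ e ∈ MY.E ∩ EZ, q.2.1 e ≤ q.2.2 e) ∧
       (∑ e ∈ MY.E, q.2.2 e = (MY.rank MY.E : ℝ)) ∧
       (∀ U : Finset α, U ⊂ MY.E → ∑ e ∈ U, q.2.2 e ≤ (MY.rank U : ℝ))}

/-- The characteristic vector of a finset. -/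
def chi {α : Type*} [DecidableEq α] (S : Finset α) : α → ℝ :=
  fun e => if e ∈ S then 1 else 0

/-- A family of sets is a chain if any two of its members are comparable
under inclusion. -/
def ChainFamily {α : Type*} (𝒜 : Finset (Finset α)) : Prop :=
  ∀ A ∈ 𝒜, ∀ B ∈ 𝒜, A ⊆ B ∨ B ⊆ A

section Aux

namespace FinMatroid

variable {α : Type*} [DecidableEq α] (M : FinMatroid α)

theorem card_le_rank {U W : Finset α} (hWU : W ⊆ U) (hW : M.Indep W) :
    W.card ≤ M.rank U := by
  classical
  apply Finset.le_max'
  exact Finset.mem_image.2 ⟨W, Finset.mem_filter.2 ⟨Finset.mem_powerset.2 hWU, hW⟩, rfl⟩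

theorem exists_basis (U : Finset α) :
    ∃ W ⊆ U, M.Indep W ∧ W.card = M.rank U := by
  classical
  have h := Finset.max'_mem _ (⟨0, Finset.mem_image.2 ⟨∅, Finset.mem_filter.2
      ⟨Finset.mem_powerset.2 (Finset.empty_subset U), M.indep_empty⟩, Finset.card_empty⟩⟩ :
      (((U.powerset.filter fun W => M.Indep W).image Finset.card)).Nonempty)
  rw [Finset.mem_image] at h
  obtain ⟨W, hW, hcard⟩ := h
  rw [Finset.mem_filter, Finset.mem_powerset] at hW
  exact ⟨W, hW.1, hW.2, by rw [rank]; exact hcard⟩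

theorem rank_mono {U V : Finset α} (hUV : U ⊆ V) : M.rank U ≤ M.rank V := by
  obtain ⟨W, hWU, hW, hcard⟩ := M.exists_basis U
  rw [← hcard]; exact M.card_le_rank (hWU.trans hUV) hW

/-- Any independent subset of `U` extends to one of full rank. -/
theorem exists_basis_superset {U A : Finset α} (hAU : A ⊆ U) (hA : M.Indep A) :
    ∃ W, A ⊆ W ∧ W ⊆ U ∧ M.Indep W ∧ W.card = M.rank U := by
  classical
  by_cases h : A.card = M.rank U
  · exact ⟨A, Finset.Subset.refl A, hAU, hA, h⟩
  · have hlt : A.card < M.rank U := lt_of_le_of_ne (M.card_le_rank hAU hA) h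
    obtain ⟨B, hBU, hB, hBcard⟩ := M.exists_basis U
    obtain ⟨e, he, hins⟩ := M.indep_exchange hA hB (by omega)
    have heU : e ∈ U := hBU (Finset.mem_sdiff.1 he).1
    have heA : e ∉ A := (Finset.mem_sdiff.1 he).2
    have hcard : (insert e A).card = A.card + 1 := Finset.card_insert_of_notMem heA
    have : M.rank U - (insert e A).card < M.rank U - A.card := by omega
    obtain ⟨W, hW1, hW2, hW3, hW4⟩ := exists_basis_superset
      (U := U) (A := insert e A) (Finset.insert_subset heU hAU) hins
    exact ⟨W, (Finset.subset_insert e A).trans hW1, hW2, hW3, hW4⟩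
termination_by M.rank U - A.card

theorem rank_submodular (U V : Finset α) :
    M.rank (U ∪ V) + M.rank (U ∩ V) ≤ M.rank U + M.rank V := by
  classical
  obtain ⟨A, hAI, hA, hAcard⟩ := M.exists_basis (U ∩ V)
  obtain ⟨B, hAB, hBU, hB, hBcard⟩ := M.exists_basis_superset
    (U := U ∪ V) (A := A) (hAI.trans Finset.inter_subset_union) hA
  have h1 : (B ∩ U).card ≤ M.rank U :=
    M.card_le_rank Finset.inter_subset_right (M.indep_subset Finset.inter_subset_left hB)
  have h2 : (B ∩ V).card ≤ M.rank V :=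
    M.card_le_rank Finset.inter_subset_right (M.indep_subset Finset.inter_subset_left hB)
  have hunion : (B ∩ U) ∪ (B ∩ V) = B := by
    rw [← Finset.inter_union_distrib_left]
    exact Finset.inter_eq_left.2 hBU
  have hinter : (B ∩ U) ∩ (B ∩ V) = B ∩ (U ∩ V) := by
    ext a; simp [Finset.mem_inter]; tauto
  have hcard : (B ∩ U).card + (B ∩ V).card = B.card + (B ∩ (U ∩ V)).card := by
    rw [← hinter, ← Finset.card_union_add_card_inter, hunion]
  have hge : A.card ≤ (B ∩ (U ∩ V)).card :=
    Finset.card_le_card (Finset.subset_inter hAB hAI)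
  omega

end FinMatroid


theorem chi_uncross {α : Type*} [DecidableEq α] (U V : Finset α) :
    chi (U ∪ V) + chi (U ∩ V) = chi U + chi V := by
  funext a
  simp only [chi, Pi.add_apply, Finset.mem_union, Finset.mem_inter]
  by_cases h1 : a ∈ U <;> by_cases h2 : a ∈ V <;> simp [h1, h2]

theorem chi_injective {α : Type*} [DecidableEq α] : Function.Injective (chi (α := α)) := by
  intro U V h
  ext a
  have := congrFun h a
  simp only [chi] at this
  by_cases h1 : a ∈ U <;> by_cases h2 : a ∈ V <;> simp_all

theorem exists_chain_spanning {α : Type*} [DecidableEq α] (F : Finset (Finset α))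
    (hcl : ∀ U ∈ F, ∀ V ∈ F, U ∪ V ∈ F ∧ U ∩ V ∈ F) :
    ∃ C ⊆ F, ChainFamily C ∧ (∀ U ∈ F, (∀ A ∈ C, A ⊆ U ∨ U ⊆ A) → U ∈ C) ∧
      ∀ U ∈ F, (chi U : α → ℝ) ∈ Submodule.span ℝ (chi '' ↑C : Set (α → ℝ)) := by
  classical
  have hne : (F.powerset.filter fun D => ChainFamily D).Nonempty :=
    ⟨∅, Finset.mem_filter.2 ⟨Finset.mem_powerset.2 (Finset.empty_subset F),
      fun A hA => absurd hA (Finset.notMem_empty A)⟩⟩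
  obtain ⟨C, hCmem, hCmax⟩ := Finset.exists_max_image _ Finset.card hne
  rw [Finset.mem_filter, Finset.mem_powerset] at hCmem
  obtain ⟨hCF, hCchain⟩ := hCmem
  have hmax : ∀ U ∈ F, (∀ A ∈ C, A ⊆ U ∨ U ⊆ A) → U ∈ C := by
    intro U hUF hcomp
    by_contra hUC
    have hchain' : ChainFamily (insert U C) := by
      intro A hA B hB
      rcases Finset.mem_insert.1 hA with hAU | hA
      · rcases Finset.mem_insert.1 hB with hBU | hB
        · rw [hAU, hBU]; left; exact Finset.Subset.refl _
        · rw [hAU]; exact (hcomp B hB).symm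
      · rcases Finset.mem_insert.1 hB with hBU | hB
        · rw [hBU]; exact hcomp A hA
        · exact hCchain A hA B hB
    have hmem : insert U C ∈ F.powerset.filter fun D => ChainFamily D :=
      Finset.mem_filter.2 ⟨Finset.mem_powerset.2 (Finset.insert_subset hUF hCF), hchain'⟩
    have := hCmax _ hmem
    rw [Finset.card_insert_of_notMem hUC] at this
    omega
  refine ⟨C, hCF, hCchain, hmax, ?_⟩
  have key : ∀ n : ℕ, ∀ U ∈ F, (C.filter fun T => ¬(T ⊆ U ∨ U ⊆ T)).card = n →
      (chi U : α → ℝ) ∈ Submodule.span ℝ (chi '' ↑C : Set (α → ℝ)) := by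
    intro n
    induction n using Nat.strong_induction_on with
    | _ n ih =>
      intro U hUF hn
      by_cases hcomp : ∀ A ∈ C, A ⊆ U ∨ U ⊆ A
      · exact Submodule.subset_span (by
          simpa using Finset.mem_image_of_mem chi (hmax U hUF hcomp))
      · push_neg at hcomp
        obtain ⟨T, hTC, hT1, hT2⟩ := hcomp
        have hTF : T ∈ F := hCF hTC
        have hUn : U ∪ T ∈ F := (hcl U hUF T hTF).1
        have hIn : U ∩ T ∈ F := (hcl U hUF T hTF).2
        -- comparability preservation
        have hpres : ∀ S ∈ C, (S ⊆ U ∨ U ⊆ S) →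
            (S ⊆ U ∪ T ∨ U ∪ T ⊆ S) ∧ (S ⊆ U ∩ T ∨ U ∩ T ⊆ S) := by
          intro S hSC hSU
          rcases hCchain S hSC T hTC with hST | hTS
          · constructor
            · left; exact hST.trans Finset.subset_union_right
            · rcases hSU with h | h
              · left; exact Finset.subset_inter h hST
              · exact absurd (h.trans hST) hT2
          · constructor
            · rcases hSU with h | h
              · left; exact h.trans Finset.subset_union_left
              · right; exact Finset.union_subset h hTS
            · rcases hSU with h | h
              · exact absurd (hTS.trans h) hT1
              · right; exact Finset.inter_subset_left.trans h
        have hsub : ∀ W, (∀ S ∈ C, (S ⊆ U ∨ U ⊆ S) → (S ⊆ W ∨ W ⊆ S)) →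
            (T ⊆ W ∨ W ⊆ T) →
            (C.filter fun S => ¬(S ⊆ W ∨ W ⊆ S)).card < n := by
          intro W hW hTW
          rw [← hn]
          apply Finset.card_lt_card
          constructor
          · intro S hS
            rw [Finset.mem_filter] at hS ⊢
            refine ⟨hS.1, fun h => hS.2 (hW S hS.1 h)⟩
          · intro hsup
            have hTmem : T ∈ C.filter fun S => ¬(S ⊆ U ∨ U ⊆ S) :=
              Finset.mem_filter.2 ⟨hTC, by tauto⟩
            have := hsup hTmem
            rw [Finset.mem_filter] at this
            exact this.2 hTW
        have h1 := ih _ (hsub (U ∪ T)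
          (fun S hS h => (hpres S hS h).1)
          (Or.inl Finset.subset_union_right)) (U ∪ T) hUn rfl
        have h2 := ih _ (hsub (U ∩ T)
          (fun S hS h => (hpres S hS h).2)
          (Or.inr Finset.inter_subset_right)) (U ∩ T) hIn rfl
        have h3 : (chi T : α → ℝ) ∈ Submodule.span ℝ (chi '' ↑C : Set (α → ℝ)) :=
          Submodule.subset_span ⟨T, by simpa using hTC, rfl⟩
        have heq : (chi U : α → ℝ) = chi (U ∪ T) + chi (U ∩ T) - chi T := by
          have := chi_uncross U T
          rw [eq_sub_iff_add_eq, this]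
        rw [heq]
        exact Submodule.sub_mem _ (Submodule.add_mem _ h1 h2) h3
  intro U hUF
  exact key _ U hUF rfl


theorem span_eq_top_of_orthoZero {M : Type*} [AddCommGroup M] [Module ℝ M]
    [FiniteDimensional ℝ M] (Φ : M →ₗ[ℝ] M →ₗ[ℝ] ℝ) (T : Set M)
    (h : ∀ d : M, (∀ t ∈ T, Φ d t = 0) → d = 0) :
    Submodule.span ℝ T = ⊤ := by
  set W := Submodule.span ℝ T with hW
  set g : M →ₗ[ℝ] Module.Dual ℝ ↥W :=
    { toFun := fun d => (Φ d).comp W.subtype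
      map_add' := fun a b => by simp [LinearMap.ext_iff]
      map_smul' := fun c a => by simp [LinearMap.ext_iff] } with hg
  have hginj : Function.Injective g := by
    rw [injective_iff_map_eq_zero]
    intro d hd
    apply h
    intro t ht
    have h2 := congrArg (fun f => f ⟨t, Submodule.subset_span ht⟩) hd
    simpa [g, LinearMap.comp_apply] using h2
  have h1 : Module.finrank ℝ M ≤ Module.finrank ℝ (Module.Dual ℝ ↥W) :=
    LinearMap.finrank_le_finrank_of_injective hginj
  rw [Subspace.dual_finrank_eq] at h1
  exact Submodule.eq_top_of_finrank_eq (le_antisymm (Submodule.finrank_le W) h1)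

variable {α : Type*} [DecidableEq α]

/-- The subspace of vectors supported on the ground sets. -/
def suppSub (EX EZ EY : Finset α) : Submodule ℝ ((α → ℝ) × (α → ℝ) × (α → ℝ)) where
  carrier := {q | (∀ e ∉ EX, q.1 e = 0) ∧ (∀ e ∉ EZ, q.2.1 e = 0) ∧ (∀ e ∉ EY, q.2.2 e = 0)}
  add_mem' := by
    rintro a b ⟨ha1, ha2, ha3⟩ ⟨hb1, hb2, hb3⟩
    exact ⟨fun e he => by simp [ha1 e he, hb1 e he],
      fun e he => by simp [ha2 e he, hb2 e he], fun e he => by simp [ha3 e he, hb3 e he]⟩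
  zero_mem' := ⟨fun _ _ => rfl, fun _ _ => rfl, fun _ _ => rfl⟩
  smul_mem' := by
    rintro c a ⟨ha1, ha2, ha3⟩
    exact ⟨fun e he => by simp [ha1 e he], fun e he => by simp [ha2 e he],
      fun e he => by simp [ha3 e he]⟩

noncomputable def restrMap (EX EZ EY : Finset α) :
    ((α → ℝ) × (α → ℝ) × (α → ℝ)) →ₗ[ℝ] (↑EX → ℝ) × (↑EZ → ℝ) × (↑EY → ℝ) where
  toFun q := (fun e => q.1 e, fun e => q.2.1 e, fun e => q.2.2 e)
  map_add' a b := rfl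
  map_smul' c a := rfl

theorem restr_bij (EX EZ EY : Finset α) :
    Function.Bijective ((restrMap EX EZ EY).domRestrict (suppSub EX EZ EY)) := by
  classical
  constructor
  · intro a b hab
    have h1 := congrArg Prod.fst hab
    have h2 := congrArg (fun p => p.2.1) hab
    have h3 := congrArg (fun p => p.2.2) hab
    ext1
    refine Prod.ext ?_ (Prod.ext ?_ ?_)
    · funext e
      by_cases he : e ∈ EX
      · exact congrFun h1 ⟨e, he⟩
      · rw [a.2.1 e he, b.2.1 e he]
    · funext e
      by_cases he : e ∈ EZ
      · exact congrFun h2 ⟨e, he⟩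
      · rw [a.2.2.1 e he, b.2.2.1 e he]
    · funext e
      by_cases he : e ∈ EY
      · exact congrFun h3 ⟨e, he⟩
      · rw [a.2.2.2 e he, b.2.2.2 e he]
  · rintro ⟨f, g, h⟩
    refine ⟨⟨(fun e => if he : e ∈ EX then f ⟨e, he⟩ else 0,
      fun e => if he : e ∈ EZ then g ⟨e, he⟩ else 0,
      fun e => if he : e ∈ EY then h ⟨e, he⟩ else 0), ?_, ?_, ?_⟩, ?_⟩
    · intro e he; simp [he]
    · intro e he; simp [he]
    · intro e he; simp [he]
    · refine Prod.ext ?_ (Prod.ext ?_ ?_) <;>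
        · funext e; simp [restrMap]

noncomputable def suppEquiv (EX EZ EY : Finset α) :
    ↥(suppSub EX EZ EY) ≃ₗ[ℝ] (↑EX → ℝ) × (↑EZ → ℝ) × (↑EY → ℝ) :=
  LinearEquiv.ofBijective _ (restr_bij EX EZ EY)

instance (EX EZ EY : Finset α) : FiniteDimensional ℝ (suppSub EX EZ EY) :=
  Module.Finite.equiv (suppEquiv EX EZ EY).symm

theorem finrank_suppSub (EX EZ EY : Finset α) :
    Module.finrank ℝ (suppSub EX EZ EY) = EX.card + EZ.card + EY.card := by
  rw [LinearEquiv.finrank_eq (suppEquiv EX EZ EY), Module.finrank_prod, Module.finrank_prod,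
    Module.finrank_fintype_fun_eq_card, Module.finrank_fintype_fun_eq_card,
    Module.finrank_fintype_fun_eq_card, Fintype.card_coe, Fintype.card_coe, Fintype.card_coe]
  ring


noncomputable def minRatio {β : Type*} [DecidableEq β] (s : Finset β) (a b : β → ℝ) : ℝ :=
  (insert (1:ℝ) (s.image fun i => b i / (a i + 1))).min' (by simp)

theorem minRatio_pos {β : Type*} [DecidableEq β] {s : Finset β} {a b : β → ℝ}
    (h : ∀ i ∈ s, 0 < b i ∧ 0 ≤ a i) : 0 < minRatio s a b := by
  have hmem := Finset.min'_mem (insert (1:ℝ) (s.image fun i => b i / (a i + 1))) (by simp)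
  rcases Finset.mem_insert.1 hmem with h1 | h1
  · rw [minRatio, h1]; norm_num
  · rw [Finset.mem_image] at h1
    obtain ⟨i, hi, hval⟩ := h1
    rw [minRatio, ← hval]
    exact div_pos (h i hi).1 (by linarith [(h i hi).2])

theorem minRatio_mul_le {β : Type*} [DecidableEq β] {s : Finset β} {a b : β → ℝ}
    (h : ∀ i ∈ s, 0 < b i ∧ 0 ≤ a i) {i : β} (hi : i ∈ s) {t : ℝ}
    (ht : t ≤ minRatio s a b) : t * a i ≤ b i := by
  have hle : minRatio s a b ≤ b i / (a i + 1) :=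
    Finset.min'_le _ _ (Finset.mem_insert.2 (Or.inr (Finset.mem_image_of_mem _ hi)))
  have ha := (h i hi).2
  have hb := (h i hi).1
  have h1 : t * a i ≤ (b i / (a i + 1)) * a i :=
    mul_le_mul_of_nonneg_right (le_trans ht hle) ha
  have h2 : (b i / (a i + 1)) * a i ≤ b i := by
    rw [div_mul_eq_mul_div, div_le_iff₀ (by linarith)]
    nlinarith
  linarith


end Aux

theorem ortho_eq_zero {α : Type*} [DecidableEq α]
    (MX MY : FinMatroid α) (EZ : Finset α) (L : ℕ)
    (x z y : α → ℝ)
    (hvert : (x, z, y) ∈ Set.extremePoints ℝ (LP_RRMB MX MY EZ L))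
    (hx : ∀ e ∈ MX.E, 0 < x e) (hy : ∀ e ∈ MY.E, 0 < y e) (hz : ∀ e ∈ EZ, 0 < z e)
    (d : (α → ℝ) × (α → ℝ) × (α → ℝ)) (hdV : d ∈ suppSub MX.E EZ MY.E)
    (h1 : ∀ U ⊆ MX.E, (∑ e ∈ U, x e = (MX.rank U : ℝ)) → ∑ e ∈ U, d.1 e = 0)
    (h2 : ∀ e ∈ MX.E ∩ EZ, z e = x e → d.2.1 e = d.1 e)
    (h3 : ∑ e ∈ EZ, d.2.1 e = 0)
    (h4 : ∀ e ∈ MY.E ∩ EZ, z e = y e → d.2.1 e = d.2.2 e)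
    (h5 : ∀ U ⊆ MY.E, (∑ e ∈ U, y e = (MY.rank U : ℝ)) → ∑ e ∈ U, d.2.2 e = 0) :
    d = 0 := by
  classical
  obtain ⟨hq, hext⟩ := hvert
  obtain ⟨hq1, hq2, hq3, hq4, hq5, hq6, hq7, hq8, hq9, hq10, hq11, hq12, hq13⟩ := hq
  dsimp only at hq1 hq2 hq3 hq4 hq5 hq6 hq7 hq8 hq9 hq10 hq11 hq12 hq13
  -- slack data
  set s4 : Finset (Finset α) :=
    MX.E.powerset.filter (fun U => ¬ (∑ e ∈ U, x e = (MX.rank U : ℝ))) with hs4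
  set s5 : Finset α := (MX.E ∩ EZ).filter (fun e => ¬ z e = x e) with hs5
  set s6 : Finset α := (MY.E ∩ EZ).filter (fun e => ¬ z e = y e) with hs6
  set ε1 := minRatio MX.E (fun e => |d.1 e|) x with hε1
  set ε2 := minRatio EZ (fun e => |d.2.1 e|) z with hε2
  set ε3 := minRatio MY.E (fun e => |d.2.2 e|) y with hε3
  set ε4 := minRatio s4 (fun U => |∑ e ∈ U, d.1 e|)
    (fun U => (MX.rank U : ℝ) - ∑ e ∈ U, x e) with hε4
  set ε5 := minRatio s5 (fun e => |d.2.1 e - d.1 e|) (fun e => x e - z e) with hε5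
  set s7 : Finset (Finset α) :=
    MY.E.powerset.filter (fun U => ¬ (∑ e ∈ U, y e = (MY.rank U : ℝ))) with hs7
  set ε7 := minRatio s7 (fun U => |∑ e ∈ U, d.2.2 e|)
    (fun U => (MY.rank U : ℝ) - ∑ e ∈ U, y e) with hε7
  set ε6 := minRatio s6 (fun e => |d.2.1 e - d.2.2 e|) (fun e => y e - z e) with hε6
  have hc1 : ∀ i ∈ MX.E, 0 < x i ∧ 0 ≤ |d.1 i| := fun i hi => ⟨hx i hi, abs_nonneg _⟩
  have hc2 : ∀ i ∈ EZ, 0 < z i ∧ 0 ≤ |d.2.1 i| := fun i hi => ⟨hz i hi, abs_nonneg _⟩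
  have hc3 : ∀ i ∈ MY.E, 0 < y i ∧ 0 ≤ |d.2.2 i| := fun i hi => ⟨hy i hi, abs_nonneg _⟩
  have hc4 : ∀ U ∈ s4, (0 < (MX.rank U : ℝ) - ∑ e ∈ U, x e) ∧ 0 ≤ |∑ e ∈ U, d.1 e| := by
    intro U hU
    rw [hs4, Finset.mem_filter, Finset.mem_powerset] at hU
    obtain ⟨hUsub, hUnt⟩ := hU
    refine ⟨?_, abs_nonneg _⟩
    rcases eq_or_ne U MX.E with rfl | hne
    · exact absurd hq7 hUnt
    · have := hq8 U (lt_of_le_of_ne hUsub hne)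
      cases lt_or_eq_of_le this with
      | inl h => linarith
      | inr h => exact absurd h hUnt
  have hc5 : ∀ i ∈ s5, (0 < x i - z i) ∧ 0 ≤ |d.2.1 i - d.1 i| := by
    intro i hi
    rw [hs5, Finset.mem_filter] at hi
    have := hq9 i hi.1
    refine ⟨?_, abs_nonneg _⟩
    cases lt_or_eq_of_le this with
    | inl h => linarith
    | inr h => exact absurd h hi.2
  have hc6 : ∀ i ∈ s6, (0 < y i - z i) ∧ 0 ≤ |d.2.1 i - d.2.2 i| := by
    intro i hi
    rw [hs6, Finset.mem_filter] at hi
    have := hq11 i hi.1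
    refine ⟨?_, abs_nonneg _⟩
    cases lt_or_eq_of_le this with
    | inl h => linarith
    | inr h => exact absurd h hi.2
  have hc7 : ∀ U ∈ s7, (0 < (MY.rank U : ℝ) - ∑ e ∈ U, y e) ∧ 0 ≤ |∑ e ∈ U, d.2.2 e| := by
    intro U hU
    rw [hs7, Finset.mem_filter, Finset.mem_powerset] at hU
    obtain ⟨hUsub, hUnt⟩ := hU
    refine ⟨?_, abs_nonneg _⟩
    rcases eq_or_ne U MY.E with rfl | hne
    · exact absurd hq12 hUnt
    · have := hq13 U (lt_of_le_of_ne hUsub hne)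
      cases lt_or_eq_of_le this with
      | inl h => linarith
      | inr h => exact absurd h hUnt
  set ε := min (min (min ε1 ε2) (min ε3 ε4)) (min (min ε5 ε6) ε7) with hε
  have hεpos : 0 < ε := by
    refine lt_min (lt_min (lt_min ?_ ?_) (lt_min ?_ ?_)) (lt_min (lt_min ?_ ?_) ?_)
    exacts [minRatio_pos hc1, minRatio_pos hc2, minRatio_pos hc3, minRatio_pos hc4,
      minRatio_pos hc5, minRatio_pos hc6, minRatio_pos hc7]
  have hεle1 : ε ≤ ε1 := le_trans (min_le_left _ _) (le_trans (min_le_left _ _) (min_le_left _ _))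
  have hεle2 : ε ≤ ε2 := le_trans (min_le_left _ _) (le_trans (min_le_left _ _) (min_le_right _ _))
  have hεle3 : ε ≤ ε3 := le_trans (min_le_left _ _) (le_trans (min_le_right _ _) (min_le_left _ _))
  have hεle4 : ε ≤ ε4 := le_trans (min_le_left _ _) (le_trans (min_le_right _ _) (min_le_right _ _))
  have hεle5 : ε ≤ ε5 := le_trans (min_le_right _ _) (le_trans (min_le_left _ _) (min_le_left _ _))
  have hεle6 : ε ≤ ε6 := le_trans (min_le_right _ _) (le_trans (min_le_left _ _) (min_le_right _ _))
  have hεle7 : ε ≤ ε7 := le_trans (min_le_right _ _) (min_le_right _ _)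
  -- tightness of E_X and E_Y for d
  have hdEX : ∑ e ∈ MX.E, d.1 e = 0 := h1 MX.E (Finset.Subset.refl _) hq7
  have hdEY : ∑ e ∈ MY.E, d.2.2 e = 0 := h5 MY.E (Finset.Subset.refl _) hq12
  -- the key feasibility claim
  have key : ∀ t : ℝ, |t| ≤ ε →
      (x + t • d.1, z + t • d.2.1, y + t • d.2.2) ∈ LP_RRMB MX MY EZ L := by
    intro t ht
    have htabs : ∀ (a : ℝ), |t * a| ≤ ε * |a| := by
      intro a
      rw [abs_mul]
      exact mul_le_mul_of_nonneg_right ht (abs_nonneg a)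
    refine ⟨?_, ?_, ?_, ?_, ?_, ?_, ?_, ?_, ?_, ?_, ?_, ?_, ?_⟩
    · -- 0 ≤ x + t d1
      intro e
      simp only [Pi.add_apply, Pi.smul_apply, smul_eq_mul]
      by_cases he : e ∈ MX.E
      · have hb : ε * |d.1 e| ≤ x e := minRatio_mul_le hc1 he hεle1
        have := htabs (d.1 e)
        have := abs_le.1 (le_trans (htabs (d.1 e)) hb)
        linarith [this.1]
      · rw [hq4 e he, hdV.1 e he]; norm_num
    · intro e
      simp only [Pi.add_apply, Pi.smul_apply, smul_eq_mul]
      by_cases he : e ∈ EZ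
      · have hb : ε * |d.2.1 e| ≤ z e := minRatio_mul_le hc2 he hεle2
        have := abs_le.1 (le_trans (htabs (d.2.1 e)) hb)
        linarith [this.1]
      · rw [hq5 e he, hdV.2.1 e he]; norm_num
    · intro e
      simp only [Pi.add_apply, Pi.smul_apply, smul_eq_mul]
      by_cases he : e ∈ MY.E
      · have hb : ε * |d.2.2 e| ≤ y e := minRatio_mul_le hc3 he hεle3
        have := abs_le.1 (le_trans (htabs (d.2.2 e)) hb)
        linarith [this.1]
      · rw [hq6 e he, hdV.2.2 e he]; norm_num
    · intro e he
      simp only [Pi.add_apply, Pi.smul_apply, smul_eq_mul]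
      rw [hq4 e he, hdV.1 e he]; ring
    · intro e he
      simp only [Pi.add_apply, Pi.smul_apply, smul_eq_mul]
      rw [hq5 e he, hdV.2.1 e he]; ring
    · intro e he
      simp only [Pi.add_apply, Pi.smul_apply, smul_eq_mul]
      rw [hq6 e he, hdV.2.2 e he]; ring
    · simp only [Pi.add_apply, Pi.smul_apply, smul_eq_mul]
      rw [Finset.sum_add_distrib, ← Finset.mul_sum, hdEX, hq7]; ring
    · intro U hU
      simp only [Pi.add_apply, Pi.smul_apply, smul_eq_mul]
      rw [Finset.sum_add_distrib, ← Finset.mul_sum]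
      by_cases htight : ∑ e ∈ U, x e = (MX.rank U : ℝ)
      · rw [h1 U hU.subset htight, htight]; ring_nf; exact le_refl _
      · have hUs4 : U ∈ s4 := by
          rw [hs4, Finset.mem_filter, Finset.mem_powerset]
          exact ⟨hU.subset, htight⟩
        have hb : ε * |∑ e ∈ U, d.1 e| ≤ (MX.rank U : ℝ) - ∑ e ∈ U, x e :=
          minRatio_mul_le hc4 hUs4 hεle4
        have := abs_le.1 (le_trans (htabs _) hb)
        linarith [this.2]
    · intro e he
      simp only [Pi.add_apply, Pi.smul_apply, smul_eq_mul]
      by_cases htight : z e = x e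
      · rw [htight, h2 e he htight]
      · have hes5 : e ∈ s5 := by rw [hs5, Finset.mem_filter]; exact ⟨he, htight⟩
        have hb : ε * |d.2.1 e - d.1 e| ≤ x e - z e := minRatio_mul_le hc5 hes5 hεle5
        have := abs_le.1 (le_trans (htabs _) hb)
        have h' : t * (d.2.1 e - d.1 e) ≤ x e - z e := by linarith [this.2]
        nlinarith [h']
    · simp only [Pi.add_apply, Pi.smul_apply, smul_eq_mul]
      rw [Finset.sum_add_distrib, ← Finset.mul_sum, h3, hq10]; ring
    · intro e he
      simp only [Pi.add_apply, Pi.smul_apply, smul_eq_mul]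
      by_cases htight : z e = y e
      · rw [htight, h4 e he htight]
      · have hes6 : e ∈ s6 := by rw [hs6, Finset.mem_filter]; exact ⟨he, htight⟩
        have hb : ε * |d.2.1 e - d.2.2 e| ≤ y e - z e := minRatio_mul_le hc6 hes6 hεle6
        have := abs_le.1 (le_trans (htabs _) hb)
        nlinarith [this.2]
    · simp only [Pi.add_apply, Pi.smul_apply, smul_eq_mul]
      rw [Finset.sum_add_distrib, ← Finset.mul_sum, hdEY, hq12]; ring
    · intro U hU
      simp only [Pi.add_apply, Pi.smul_apply, smul_eq_mul]
      rw [Finset.sum_add_distrib, ← Finset.mul_sum]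
      by_cases htight : ∑ e ∈ U, y e = (MY.rank U : ℝ)
      · rw [h5 U hU.subset htight, htight]; ring_nf; exact le_refl _
      · have hUs7 : U ∈ s7 := by
          rw [hs7, Finset.mem_filter, Finset.mem_powerset]
          exact ⟨hU.subset, htight⟩
        have hb : ε * |∑ e ∈ U, d.2.2 e| ≤ (MY.rank U : ℝ) - ∑ e ∈ U, y e :=
          minRatio_mul_le hc7 hUs7 hεle7
        have := abs_le.1 (le_trans (htabs _) hb)
        linarith [this.2]
  -- apply extremality
  have hmem1 := key ε (le_of_eq (abs_of_pos hεpos))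
  have hmem2 := key (-ε) (by rw [abs_neg]; exact le_of_eq (abs_of_pos hεpos))
  have hseg : (x, z, y) ∈ openSegment ℝ
      (x + (-ε) • d.1, z + (-ε) • d.2.1, y + (-ε) • d.2.2)
      (x + ε • d.1, z + ε • d.2.1, y + ε • d.2.2) := by
    refine ⟨1/2, 1/2, by norm_num, by norm_num, by norm_num, ?_⟩
    refine Prod.ext ?_ (Prod.ext ?_ ?_) <;>
      · funext e
        simp only [Prod.smul_fst, Prod.smul_snd, Prod.fst_add, Prod.snd_add, Pi.add_apply,
          Pi.smul_apply, smul_eq_mul, Prod.mk_add_mk, Prod.smul_mk]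
        ring
  have heq := hext hmem1 hmem2 (by rwa [openSegment_symm])
  have hd1 : ∀ e, ε * d.1 e = 0 := by
    intro e
    have := congrFun (congrArg Prod.fst heq) e
    simp only [Pi.add_apply, Pi.smul_apply, smul_eq_mul] at this
    linarith
  have hd2 : ∀ e, ε * d.2.1 e = 0 := by
    intro e
    have := congrFun (congrArg (fun p => p.2.1) heq) e
    simp only [Pi.add_apply, Pi.smul_apply, smul_eq_mul] at this
    linarith
  have hd3 : ∀ e, ε * d.2.2 e = 0 := by
    intro e
    have := congrFun (congrArg (fun p => p.2.2) heq) e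
    simp only [Pi.add_apply, Pi.smul_apply, smul_eq_mul] at this
    linarith
  have hεne : ε ≠ 0 := ne_of_gt hεpos
  refine Prod.ext ?_ (Prod.ext ?_ ?_) <;>
    · funext e
      first
      | exact (mul_eq_zero.1 (hd1 e)).resolve_left hεne
      | exact (mul_eq_zero.1 (hd2 e)).resolve_left hεne
      | exact (mul_eq_zero.1 (hd3 e)).resolve_left hεne


noncomputable def dotForm {α : Type*} [DecidableEq α] (EX EZ EY : Finset α) :
    ((α → ℝ) × (α → ℝ) × (α → ℝ)) →ₗ[ℝ] ((α → ℝ) × (α → ℝ) × (α → ℝ)) →ₗ[ℝ] ℝ :=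
  LinearMap.mk₂ ℝ
    (fun p q => ∑ e ∈ EX, p.1 e * q.1 e + ∑ e ∈ EZ, p.2.1 e * q.2.1 e
      + ∑ e ∈ EY, p.2.2 e * q.2.2 e)
    (fun m₁ m₂ n => by
      simp only [Prod.fst_add, Prod.snd_add, Pi.add_apply, add_mul]
      rw [Finset.sum_add_distrib, Finset.sum_add_distrib, Finset.sum_add_distrib]; ring)
    (fun c m n => by
      simp only [Prod.smul_fst, Prod.smul_snd, Pi.smul_apply, smul_eq_mul]
      rw [mul_add, mul_add, Finset.mul_sum, Finset.mul_sum, Finset.mul_sum]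
      congr 1
      congr 1
      all_goals exact Finset.sum_congr rfl fun i _ => by ring)
    (fun m n₁ n₂ => by
      simp only [Prod.fst_add, Prod.snd_add, Pi.add_apply, mul_add]
      rw [Finset.sum_add_distrib, Finset.sum_add_distrib, Finset.sum_add_distrib]; ring)
    (fun c m n => by
      simp only [Prod.smul_fst, Prod.smul_snd, Pi.smul_apply, smul_eq_mul]
      rw [mul_add, mul_add, Finset.mul_sum, Finset.mul_sum, Finset.mul_sum]
      congr 1
      congr 1
      all_goals exact Finset.sum_congr rfl fun i _ => by ring)

theorem dotForm_apply {α : Type*} [DecidableEq α] (EX EZ EY : Finset α)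
    (p q : (α → ℝ) × (α → ℝ) × (α → ℝ)) :
    dotForm EX EZ EY p q = ∑ e ∈ EX, p.1 e * q.1 e + ∑ e ∈ EZ, p.2.1 e * q.2.1 e
      + ∑ e ∈ EY, p.2.2 e * q.2.2 e := rfl

theorem sum_mul_chi {α : Type*} [DecidableEq α] (s U : Finset α) (hUs : U ⊆ s) (f : α → ℝ) :
    ∑ e ∈ s, f e * chi U e = ∑ e ∈ U, f e := by
  simp only [chi, mul_ite, mul_one, mul_zero]
  rw [Finset.sum_ite_mem, Finset.inter_eq_right.2 hUs]


theorem tight_closed {α : Type*} [DecidableEq α] (M : FinMatroid α) (x : α → ℝ)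
    (hall : ∀ W ⊆ M.E, ∑ e ∈ W, x e ≤ (M.rank W : ℝ))
    {U V : Finset α} (hU : U ⊆ M.E) (hV : V ⊆ M.E)
    (htU : ∑ e ∈ U, x e = (M.rank U : ℝ)) (htV : ∑ e ∈ V, x e = (M.rank V : ℝ)) :
    (∑ e ∈ U ∪ V, x e = (M.rank (U ∪ V) : ℝ)) ∧
      (∑ e ∈ U ∩ V, x e = (M.rank (U ∩ V) : ℝ)) := by
  have hsum : ∑ e ∈ U ∪ V, x e + ∑ e ∈ U ∩ V, x e = ∑ e ∈ U, x e + ∑ e ∈ V, x e :=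
    Finset.sum_union_inter
  have h1 := hall (U ∪ V) (Finset.union_subset hU hV)
  have h2 := hall (U ∩ V) ((Finset.inter_subset_left).trans hU)
  have hsub : ((M.rank (U ∪ V) : ℝ)) + (M.rank (U ∩ V) : ℝ) ≤ (M.rank U : ℝ) + (M.rank V : ℝ) := by
    exact_mod_cast M.rank_submodular U V
  constructor <;> linarith


/-- A vertex solution `(x, z, y)` of `LP_RRMB` with all coordinates
on `E_X`, `E_Y`, `E_Z` strictly positive admits nonempty chain families
`L(x) ⊆ F(x)`, `L(y) ⊆ F(y)` of tight sets and subsets `E(x,z) ⊆ E(x,z)*`,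
`E(z,y) ⊆ E(z,y)*` of tight elements such that
(i) `|E_X| + |E_Z| + |E_Y| = |L(x)| + |E(x,z)| + |E(z,y)| + |L(y)| + 1`, and
(ii) the corresponding vectors, together with `χ_Z(E_Z)`, are linearly independent. -/
theorem vertex_characterization_LP_RRMB {α : Type*} [DecidableEq α]
    (MX MY : FinMatroid α) (EZ : Finset α) (L : ℕ)
    (hEXne : MX.E.Nonempty) (hEYne : MY.E.Nonempty) (hEZne : EZ.Nonempty)
    (hEZ : EZ ⊆ MX.E ∪ MY.E) (hL : L ≤ EZ.card)
    (x z y : α → ℝ)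
    (hvert : (x, z, y) ∈ Set.extremePoints ℝ (LP_RRMB MX MY EZ L))
    (hx : ∀ e ∈ MX.E, 0 < x e) (hy : ∀ e ∈ MY.E, 0 < y e) (hz : ∀ e ∈ EZ, 0 < z e) :
    ∃ (Lx Ly : Finset (Finset α)) (Exz Ezy : Finset α),
      Lx.Nonempty ∧ Ly.Nonempty ∧ ChainFamily Lx ∧ ChainFamily Ly ∧
      (∀ U ∈ Lx, U ⊆ MX.E ∧ ∑ e ∈ U, x e = (MX.rank U : ℝ)) ∧
      (∀ U ∈ Ly, U ⊆ MY.E ∧ ∑ e ∈ U, y e = (MY.rank U : ℝ)) ∧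
      Exz ⊆ MX.E ∩ EZ ∧ (∀ e ∈ Exz, z e = x e) ∧
      Ezy ⊆ MY.E ∩ EZ ∧ (∀ e ∈ Ezy, z e = y e) ∧
      MX.E.card + EZ.card + MY.E.card
        = Lx.card + Exz.card + Ezy.card + Ly.card + 1 ∧
      LinearIndependent ℝ (Sum.elim
        (fun U : {U // U ∈ Lx} =>
          ((chi U.1, 0, 0) : (α → ℝ) × (α → ℝ) × (α → ℝ)))
        (Sum.elim
          (fun U : {U // U ∈ Ly} =>
            ((0, 0, chi U.1) : (α → ℝ) × (α → ℝ) × (α → ℝ)))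
          (Sum.elim
            (fun e : {e // e ∈ Exz} =>
              ((-(chi {e.1}), chi {e.1}, 0) : (α → ℝ) × (α → ℝ) × (α → ℝ)))
            (Sum.elim
              (fun e : {e // e ∈ Ezy} =>
                ((0, chi {e.1}, -(chi {e.1})) : (α → ℝ) × (α → ℝ) × (α → ℝ)))
              (fun _ : Unit =>
                ((0, chi EZ, 0) : (α → ℝ) × (α → ℝ) × (α → ℝ))))))) := by
  classical
  obtain ⟨hq1, hq2, hq3, hq4, hq5, hq6, hq7, hq8, hq9, hq10, hq11, hq12, hq13⟩ := hvert.1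
  dsimp only at hq1 hq2 hq3 hq4 hq5 hq6 hq7 hq8 hq9 hq10 hq11 hq12 hq13
  have hallX : ∀ W ⊆ MX.E, ∑ e ∈ W, x e ≤ (MX.rank W : ℝ) := by
    intro W hW
    rcases eq_or_ne W MX.E with rfl | hne
    · exact le_of_eq hq7
    · exact hq8 W (lt_of_le_of_ne hW hne)
  have hallY : ∀ W ⊆ MY.E, ∑ e ∈ W, y e ≤ (MY.rank W : ℝ) := by
    intro W hW
    rcases eq_or_ne W MY.E with rfl | hne
    · exact le_of_eq hq12
    · exact hq13 W (lt_of_le_of_ne hW hne)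
  set Fx : Finset (Finset α) :=
    MX.E.powerset.filter (fun U => ∑ e ∈ U, x e = (MX.rank U : ℝ)) with hFx
  set Fy : Finset (Finset α) :=
    MY.E.powerset.filter (fun U => ∑ e ∈ U, y e = (MY.rank U : ℝ)) with hFy
  have hFxmem : ∀ {U}, U ∈ Fx ↔ U ⊆ MX.E ∧ ∑ e ∈ U, x e = (MX.rank U : ℝ) := by
    intro U; rw [hFx, Finset.mem_filter, Finset.mem_powerset]
  have hFymem : ∀ {U}, U ∈ Fy ↔ U ⊆ MY.E ∧ ∑ e ∈ U, y e = (MY.rank U : ℝ) := by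
    intro U; rw [hFy, Finset.mem_filter, Finset.mem_powerset]
  have hFxcl : ∀ U ∈ Fx, ∀ V ∈ Fx, U ∪ V ∈ Fx ∧ U ∩ V ∈ Fx := by
    intro U hU V hV
    rw [hFxmem] at hU hV
    have := tight_closed MX x hallX hU.1 hV.1 hU.2 hV.2
    exact ⟨hFxmem.2 ⟨Finset.union_subset hU.1 hV.1, this.1⟩,
      hFxmem.2 ⟨(Finset.inter_subset_left).trans hU.1, this.2⟩⟩
  have hFycl : ∀ U ∈ Fy, ∀ V ∈ Fy, U ∪ V ∈ Fy ∧ U ∩ V ∈ Fy := by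
    intro U hU V hV
    rw [hFymem] at hU hV
    have := tight_closed MY y hallY hU.1 hV.1 hU.2 hV.2
    exact ⟨hFymem.2 ⟨Finset.union_subset hU.1 hV.1, this.1⟩,
      hFymem.2 ⟨(Finset.inter_subset_left).trans hU.1, this.2⟩⟩
  obtain ⟨CX, hCXF, hCXchain, hCXmax, hCXspan⟩ := exists_chain_spanning Fx hFxcl
  obtain ⟨CY, hCYF, hCYchain, hCYmax, hCYspan⟩ := exists_chain_spanning Fy hFycl
  have hEXFx : MX.E ∈ Fx := hFxmem.2 ⟨Finset.Subset.refl _, hq7⟩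
  have hEYFy : MY.E ∈ Fy := hFymem.2 ⟨Finset.Subset.refl _, hq12⟩
  have hEXCX : MX.E ∈ CX :=
    hCXmax MX.E hEXFx (fun A hA => Or.inl ((hFxmem.1 (hCXF hA)).1))
  have hEYCY : MY.E ∈ CY :=
    hCYmax MY.E hEYFy (fun A hA => Or.inl ((hFymem.1 (hCYF hA)).1))
  -- the five classes of vectors
  set vX : Finset α → (α → ℝ) × (α → ℝ) × (α → ℝ) := fun U => (chi U, 0, 0) with hvX
  set vY : Finset α → (α → ℝ) × (α → ℝ) × (α → ℝ) := fun U => (0, 0, chi U) with hvY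
  set vxz : α → (α → ℝ) × (α → ℝ) × (α → ℝ) := fun e => (-(chi {e}), chi {e}, 0) with hvxz
  set vzy : α → (α → ℝ) × (α → ℝ) × (α → ℝ) := fun e => (0, chi {e}, -(chi {e})) with hvzy
  set vZ : (α → ℝ) × (α → ℝ) × (α → ℝ) := (0, chi EZ, 0) with hvZ
  set Exzs : Finset α := (MX.E ∩ EZ).filter (fun e => z e = x e) with hExzs
  set Ezys : Finset α := (MY.E ∩ EZ).filter (fun e => z e = y e) with hEzys
  set Vsub := suppSub MX.E EZ MY.E with hVsub
  set T : Set ((α → ℝ) × (α → ℝ) × (α → ℝ)) :=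
    vX '' ↑Fx ∪ vY '' ↑Fy ∪ vxz '' ↑Exzs ∪ vzy '' ↑Ezys ∪ {vZ} with hT
  have hchiSupp : ∀ (U W : Finset α), U ⊆ W → ∀ e ∉ W, chi U e = 0 := by
    intro U W hUW e he
    simp only [chi, ite_eq_right_iff]
    intro heU; exact absurd (hUW heU) he
  have hTV : ∀ t ∈ T, t ∈ Vsub := by
    rintro t (((( ⟨U, hU, rfl⟩ | ⟨U, hU, rfl⟩) | ⟨e, he, rfl⟩) | ⟨e, he, rfl⟩) | rfl)
    · exact ⟨hchiSupp U MX.E (hFxmem.1 (by simpa using hU)).1, fun _ _ => rfl, fun _ _ => rfl⟩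
    · exact ⟨fun _ _ => rfl, fun _ _ => rfl, hchiSupp U MY.E (hFymem.1 (by simpa using hU)).1⟩
    · rw [hExzs] at he
      simp only [Finset.coe_filter, Set.mem_setOf_eq, Finset.mem_inter] at he
      refine ⟨?_, ?_, fun _ _ => rfl⟩
      · intro a ha
        simp [hvxz, hchiSupp {e} MX.E (Finset.singleton_subset_iff.2 he.1.1) a ha,
          neg_zero]
      · exact hchiSupp {e} EZ (Finset.singleton_subset_iff.2 he.1.2)
    · rw [hEzys] at he
      simp only [Finset.coe_filter, Set.mem_setOf_eq, Finset.mem_inter] at he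
      refine ⟨fun _ _ => rfl, hchiSupp {e} EZ (Finset.singleton_subset_iff.2 he.1.2), ?_⟩
      · intro a ha
        simp [hvzy, hchiSupp {e} MY.E (Finset.singleton_subset_iff.2 he.1.1) a ha,
          neg_zero]
    · exact ⟨fun _ _ => rfl, hchiSupp EZ EZ (Finset.Subset.refl _), fun _ _ => rfl⟩
  -- orthogonality computations
  have hsum_mul_chi_neg : ∀ (sfin U : Finset α), U ⊆ sfin → ∀ f : α → ℝ,
      ∑ e ∈ sfin, f e * (-(chi U)) e = -∑ e ∈ U, f e := by
    intro sfin U hUs f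
    rw [← sum_mul_chi sfin U hUs f, ← Finset.sum_neg_distrib]
    exact Finset.sum_congr rfl fun i _ => by simp [Pi.neg_apply]
  have hTspan : Submodule.span ℝ T = Vsub := by
    apply le_antisymm (Submodule.span_le.2 hTV)
    -- hard direction via extreme point
    have hkey : ∀ d : (α → ℝ) × (α → ℝ) × (α → ℝ), d ∈ Vsub →
        (∀ t ∈ T, dotForm MX.E EZ MY.E d t = 0) → d = 0 := by
      intro d hdV hdT
      apply ortho_eq_zero MX MY EZ L x z y hvert hx hy hz d hdV
      · -- h1
        intro U hU ht
        have hmem : vX U ∈ T := Or.inl (Or.inl (Or.inl (Or.inl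
          ⟨U, by simpa using hFxmem.2 ⟨hU, ht⟩, rfl⟩)))
        have := hdT _ hmem
        rw [dotForm_apply] at this
        simp only [hvX] at this
        rw [sum_mul_chi MX.E U hU d.1] at this
        simpa using this
      · -- h2
        intro e he htight
        have hmemE : e ∈ Exzs := by
          rw [hExzs, Finset.mem_filter]; exact ⟨he, htight⟩
        have hmem : vxz e ∈ T := Or.inl (Or.inl (Or.inr ⟨e, by simpa using hmemE, rfl⟩))
        have := hdT _ hmem
        rw [dotForm_apply] at this
        simp only [hvxz] at this
        rw [hsum_mul_chi_neg MX.E {e}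
            (Finset.singleton_subset_iff.2 (Finset.mem_inter.1 he).1) d.1,
          sum_mul_chi EZ {e}
            (Finset.singleton_subset_iff.2 (Finset.mem_inter.1 he).2) d.2.1] at this
        simp only [Finset.sum_singleton] at this
        simp only [Pi.zero_apply, mul_zero, Finset.sum_const_zero, add_zero] at this
        linarith
      · -- h3
        have hmem : vZ ∈ T := Or.inr rfl
        have := hdT _ hmem
        rw [dotForm_apply] at this
        simp only [hvZ] at this
        rw [sum_mul_chi EZ EZ (Finset.Subset.refl _) d.2.1] at this
        simpa using this
      · -- h4
        intro e he htight
        have hmemE : e ∈ Ezys := by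
          rw [hEzys, Finset.mem_filter]; exact ⟨he, htight⟩
        have hmem : vzy e ∈ T := Or.inl (Or.inr ⟨e, by simpa using hmemE, rfl⟩)
        have := hdT _ hmem
        rw [dotForm_apply] at this
        simp only [hvzy] at this
        rw [hsum_mul_chi_neg MY.E {e}
            (Finset.singleton_subset_iff.2 (Finset.mem_inter.1 he).1) d.2.2,
          sum_mul_chi EZ {e}
            (Finset.singleton_subset_iff.2 (Finset.mem_inter.1 he).2) d.2.1] at this
        simp only [Finset.sum_singleton] at this
        simp only [Pi.zero_apply, mul_zero, Finset.sum_const_zero, zero_add] at this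
        linarith
      · -- h5
        intro U hU ht
        have hmem : vY U ∈ T := Or.inl (Or.inl (Or.inl (Or.inr
          ⟨U, by simpa using hFymem.2 ⟨hU, ht⟩, rfl⟩)))
        have := hdT _ hmem
        rw [dotForm_apply] at this
        simp only [hvY] at this
        rw [sum_mul_chi MY.E U hU d.2.2] at this
        simpa using this
    -- transfer to the subtype
    set T' : Set ↥Vsub := {v : ↥Vsub | (v : (α → ℝ) × (α → ℝ) × (α → ℝ)) ∈ T} with hT'
    have hspan' : Submodule.span ℝ T' = ⊤ := by
      apply span_eq_top_of_orthoZero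
        ((dotForm MX.E EZ MY.E).compl₁₂ Vsub.subtype Vsub.subtype)
      intro dv hdv
      apply Subtype.ext
      apply hkey _ dv.2
      intro t ht
      have := hdv ⟨t, hTV t ht⟩ ht
      simpa using this
    have himg : (Vsub.subtype '' T') = T := by
      apply Set.Subset.antisymm
      · rintro _ ⟨v, hv, rfl⟩; exact hv
      · intro t ht; exact ⟨⟨t, hTV t ht⟩, ht, rfl⟩
    calc Vsub = Submodule.map Vsub.subtype ⊤ := by
          rw [Submodule.map_top, Submodule.range_subtype]
      _ = Submodule.map Vsub.subtype (Submodule.span ℝ T') := by rw [hspan']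
      _ = Submodule.span ℝ (Vsub.subtype '' T') := by rw [Submodule.map_span]
      _ = Submodule.span ℝ T := by rw [himg]
      _ ≤ Submodule.span ℝ T := le_refl _
  set S : Set ((α → ℝ) × (α → ℝ) × (α → ℝ)) :=
    vX '' ↑CX ∪ vY '' ↑CY ∪ vxz '' ↑Exzs ∪ vzy '' ↑Ezys ∪ {vZ} with hS
  have hST : S ⊆ T := by
    apply Set.union_subset_union
    apply Set.union_subset_union
    apply Set.union_subset_union
    apply Set.union_subset_union
    · exact Set.image_mono (by exact_mod_cast hCXF)
    · exact Set.image_mono (by exact_mod_cast hCYF)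
    · exact le_refl _
    · exact le_refl _
    · exact le_refl _
  -- linear maps into the three blocks
  set ι1 : (α → ℝ) →ₗ[ℝ] (α → ℝ) × (α → ℝ) × (α → ℝ) :=
    { toFun := fun f => (f, 0, 0)
      map_add' := fun f g => by simp [Prod.ext_iff]
      map_smul' := fun c f => by simp [Prod.ext_iff] } with hι1
  set ι3 : (α → ℝ) →ₗ[ℝ] (α → ℝ) × (α → ℝ) × (α → ℝ) :=
    { toFun := fun f => (0, 0, f)
      map_add' := fun f g => by simp [Prod.ext_iff]
      map_smul' := fun c f => by simp [Prod.ext_iff] } with hι3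
  have hTspanS : T ⊆ ↑(Submodule.span ℝ S) := by
    rintro t (((( ⟨U, hU, rfl⟩ | ⟨U, hU, rfl⟩) | ⟨e, he, rfl⟩) | ⟨e, he, rfl⟩) | rfl)
    · have h := hCXspan U (by simpa using hU)
      have h2 := Submodule.apply_mem_span_image_of_mem_span ι1 h
      have himg : ι1 '' (chi '' ↑CX) = vX '' ↑CX := by
        rw [Set.image_image]; rfl
      have hle : Submodule.span ℝ (vX '' ↑CX) ≤ Submodule.span ℝ S :=
        Submodule.span_mono (fun a ha =>
          Or.inl (Or.inl (Or.inl (Or.inl ha))))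
      rw [himg] at h2
      exact hle h2
    · have h := hCYspan U (by simpa using hU)
      have h2 := Submodule.apply_mem_span_image_of_mem_span ι3 h
      have himg : ι3 '' (chi '' ↑CY) = vY '' ↑CY := by
        rw [Set.image_image]; rfl
      have hle : Submodule.span ℝ (vY '' ↑CY) ≤ Submodule.span ℝ S :=
        Submodule.span_mono (fun a ha =>
          Or.inl (Or.inl (Or.inl (Or.inr ha))))
      rw [himg] at h2
      exact hle h2
    · exact Submodule.subset_span (Or.inl (Or.inl (Or.inr ⟨e, he, rfl⟩)))
    · exact Submodule.subset_span (Or.inl (Or.inr ⟨e, he, rfl⟩))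
    · exact Submodule.subset_span (Or.inr rfl)
  have hspanS : Submodule.span ℝ S = Vsub := by
    apply le_antisymm (Submodule.span_le.2 (fun s hs => hTV s (hST hs)))
    rw [← hTspan]
    exact Submodule.span_le.2 hTspanS
  -- evaluation helpers
  have hchival : ∀ (U : Finset α) (e : α), e ∈ U → chi U e = 1 := by
    intro U e he; simp [chi, he]
  obtain ⟨eX, heX⟩ := hEXne
  obtain ⟨eY, heY⟩ := hEYne
  obtain ⟨eZ, heZ⟩ := hEZne
  -- the seed set
  set S0 : Set ((α → ℝ) × (α → ℝ) × (α → ℝ)) :=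
    insert (vX MX.E) (insert (vY MY.E) {vZ}) with hS0
  have hS0S : S0 ⊆ S := by
    rintro a (rfl | rfl | rfl)
    · exact Or.inl (Or.inl (Or.inl (Or.inl ⟨MX.E, by simpa using hEXCX, rfl⟩)))
    · exact Or.inl (Or.inl (Or.inl (Or.inr ⟨MY.E, by simpa using hEYCY, rfl⟩)))
    · exact Or.inr rfl
  have hvZne : vZ ≠ (0 : (α → ℝ) × (α → ℝ) × (α → ℝ)) := by
    intro h
    have := congrFun (congrArg (fun p => p.2.1) h) eZ
    rw [hvZ] at this
    simp only [hchival EZ eZ heZ] at this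
    norm_num at this
  have hYnotin : vY MY.E ∉ Submodule.span ℝ ({vZ} : Set _) := by
    rw [Submodule.mem_span_singleton]
    rintro ⟨a, ha⟩
    have := congrFun (congrArg (fun p => p.2.2) ha) eY
    rw [hvZ, hvY] at this
    simp only [Prod.smul_snd, Pi.smul_apply, smul_eq_mul, Pi.zero_apply, mul_zero,
      hchival MY.E eY heY] at this
    norm_num at this
  have hXnotin : vX MX.E ∉ Submodule.span ℝ (insert (vY MY.E) {vZ} : Set _) := by
    rw [Submodule.mem_span_insert]
    rintro ⟨a, w, hw, ha⟩
    rw [Submodule.mem_span_singleton] at hw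
    obtain ⟨b, rfl⟩ := hw
    have := congrFun (congrArg (fun p => p.1) ha) eX
    rw [hvZ, hvY, hvX] at this
    simp only [Prod.fst_add, Prod.smul_fst, Pi.add_apply, Pi.smul_apply, smul_eq_mul,
      Pi.zero_apply, mul_zero, hchival MX.E eX heX] at this
    norm_num at this
  have hYne_vZ : vY MY.E ∉ ({vZ} : Set _) := by
    intro h
    rw [Set.mem_singleton_iff] at h
    have := congrFun (congrArg (fun p => p.2.2) h) eY
    rw [hvZ, hvY] at this
    simp only [hchival MY.E eY heY, Pi.zero_apply] at this
    norm_num at this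
  have hXne_ins : vX MX.E ∉ (insert (vY MY.E) {vZ} : Set _) := by
    rintro (h | h)
    · have := congrFun (congrArg (fun p => p.1) h) eX
      rw [hvY, hvX] at this
      simp only [hchival MX.E eX heX, Pi.zero_apply] at this
      norm_num at this
    · rw [Set.mem_singleton_iff] at h
      have := congrFun (congrArg (fun p => p.1) h) eX
      rw [hvZ, hvX] at this
      simp only [hchival MX.E eX heX, Pi.zero_apply] at this
      norm_num at this
  have hS0li : LinearIndependent ℝ ((↑) : S0 → (α → ℝ) × (α → ℝ) × (α → ℝ)) := by
    rw [hS0]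
    refine (linearIndepOn_id_insert hXne_ins).2 ⟨?_, hXnotin⟩
    refine (linearIndepOn_id_insert hYne_vZ).2 ⟨?_, hYnotin⟩
    exact (linearIndepOn_singleton_iff ℝ).2 hvZne
  -- extend to a basis of Vsub inside S
  have hS0li' : LinearIndepOn ℝ id S0 := hS0li
  set B : Set ((α → ℝ) × (α → ℝ) × (α → ℝ)) := hS0li'.extend hS0S with hB
  have hBS : B ⊆ S := hS0li'.extend_subset hS0S
  have hS0B : S0 ⊆ B := hS0li'.subset_extend hS0S
  have hBli : LinearIndependent ℝ ((↑) : B → (α → ℝ) × (α → ℝ) × (α → ℝ)) :=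
    hS0li'.linearIndepOn_extend hS0S
  have hSspanB : S ⊆ ↑(Submodule.span ℝ B) := hS0li'.subset_span_extend hS0S
  have hspanB : Submodule.span ℝ B = Vsub := by
    apply le_antisymm
    · rw [← hspanS]; exact Submodule.span_mono hBS
    · rw [← hspanS]; exact Submodule.span_le.2 hSspanB
  have hSfin : S.Finite := by
    rw [hS]
    exact ((((CX : Set (Finset α)).toFinite.image vX).union
      ((CY : Set (Finset α)).toFinite.image vY)).union
      ((Exzs : Set α).toFinite.image vxz)).union
      ((Ezys : Set α).toFinite.image vzy) |>.union (Set.finite_singleton vZ)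
  have hBfin : B.Finite := hSfin.subset hBS
  haveI : Fintype ↥B := hBfin.fintype
  set Bf : Finset ((α → ℝ) × (α → ℝ) × (α → ℝ)) := B.toFinset with hBf
  have hmemBf : ∀ {a}, a ∈ Bf ↔ a ∈ B := fun {a} => Set.mem_toFinset
  have h0B : (0 : (α → ℝ) × (α → ℝ) × (α → ℝ)) ∉ B := fun h => hBli.ne_zero ⟨0, h⟩ rfl
  set Lx := CX.filter (fun U => vX U ∈ B) with hLx
  set Ly := CY.filter (fun U => vY U ∈ B) with hLy
  set Exz := Exzs.filter (fun e => vxz e ∈ B) with hExz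
  set Ezy := Ezys.filter (fun e => vzy e ∈ B) with hEzy
  have hvXinj : Function.Injective vX := fun U U' h => chi_injective (congrArg Prod.fst h)
  have hvYinj : Function.Injective vY := fun U U' h =>
    chi_injective (congrArg (fun p => p.2.2) h)
  have hvxzinj : Function.Injective vxz := fun e e' h => Finset.singleton_injective
    (chi_injective (congrArg (fun p => p.2.1) h))
  have hvzyinj : Function.Injective vzy := fun e e' h => Finset.singleton_injective
    (chi_injective (congrArg (fun p => p.2.1) h))
  have hone : ∀ e : α, chi ({e} : Finset α) e = 1 :=
    fun e => hchival {e} e (Finset.mem_singleton_self e)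
  -- class separation facts
  have hXne_xz : ∀ (U : Finset α) (e : α), vX U ≠ vxz e := by
    intro U e h
    have := congrFun (congrArg (fun p => p.2.1) h) e
    rw [hvX, hvxz] at this
    simp only [hone e, Pi.zero_apply] at this
    norm_num at this
  have hXne_zy : ∀ (U : Finset α) (e : α), vX U ≠ vzy e := by
    intro U e h
    have := congrFun (congrArg (fun p => p.2.1) h) e
    rw [hvX, hvzy] at this
    simp only [hone e, Pi.zero_apply] at this
    norm_num at this
  have hXne_Z : ∀ U : Finset α, vX U ≠ vZ := by
    intro U h
    have := congrFun (congrArg (fun p => p.2.1) h) eZ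
    rw [hvX, hvZ] at this
    simp only [hchival EZ eZ heZ, Pi.zero_apply] at this
    norm_num at this
  have hYne_xz : ∀ (U : Finset α) (e : α), vY U ≠ vxz e := by
    intro U e h
    have := congrFun (congrArg (fun p => p.2.1) h) e
    rw [hvY, hvxz] at this
    simp only [hone e, Pi.zero_apply] at this
    norm_num at this
  have hYne_zy : ∀ (U : Finset α) (e : α), vY U ≠ vzy e := by
    intro U e h
    have := congrFun (congrArg (fun p => p.2.1) h) e
    rw [hvY, hvzy] at this
    simp only [hone e, Pi.zero_apply] at this
    norm_num at this
  have hYne_Z : ∀ U : Finset α, vY U ≠ vZ := by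
    intro U h
    have := congrFun (congrArg (fun p => p.2.1) h) eZ
    rw [hvY, hvZ] at this
    simp only [hchival EZ eZ heZ, Pi.zero_apply] at this
    norm_num at this
  have hxz_ne_zy : ∀ e e' : α, vxz e ≠ vzy e' := by
    intro e e' h
    have := congrFun (congrArg Prod.fst h) e
    rw [hvxz, hvzy] at this
    simp only [Pi.neg_apply, hone e, Pi.zero_apply] at this
    norm_num at this
  have hxz_ne_Z : ∀ e : α, vxz e ≠ vZ := by
    intro e h
    have := congrFun (congrArg Prod.fst h) e
    rw [hvxz, hvZ] at this
    simp only [Pi.neg_apply, hone e, Pi.zero_apply] at this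
    norm_num at this
  have hzy_ne_Z : ∀ e : α, vzy e ≠ vZ := by
    intro e h
    have := congrFun (congrArg (fun p => p.2.2) h) e
    rw [hvzy, hvZ] at this
    simp only [Pi.neg_apply, hone e, Pi.zero_apply] at this
    norm_num at this
  have hXYB : ∀ U U' : Finset α, vX U ∈ B → vX U ≠ vY U' := by
    intro U U' hUB h
    apply h0B
    have h1 : chi U = 0 := by
      have := congrArg Prod.fst h
      rw [hvX, hvY] at this
      exact this
    have : vX U = 0 := by rw [hvX]; rw [Prod.ext_iff]; exact ⟨h1, rfl⟩
    rwa [this] at hUB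
  -- decomposition of Bf
  have hBfeq : Bf = ((((Lx.image vX ∪ Ly.image vY) ∪ Exz.image vxz) ∪ Ezy.image vzy)
      ∪ {vZ}) := by
    apply Finset.Subset.antisymm
    · intro b hb
      have hbB : b ∈ B := hmemBf.1 hb
      rcases hBS hbB with (((⟨U, hU, rfl⟩ | ⟨U, hU, rfl⟩) | ⟨e, he, rfl⟩) | ⟨e, he, rfl⟩) | hb'
      · exact Finset.mem_union.2 (Or.inl (Finset.mem_union.2 (Or.inl (Finset.mem_union.2
          (Or.inl (Finset.mem_union.2 (Or.inl (Finset.mem_image.2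
          ⟨U, Finset.mem_filter.2 ⟨by simpa using hU, hbB⟩, rfl⟩))))))))
      · exact Finset.mem_union.2 (Or.inl (Finset.mem_union.2 (Or.inl (Finset.mem_union.2
          (Or.inl (Finset.mem_union.2 (Or.inr (Finset.mem_image.2
          ⟨U, Finset.mem_filter.2 ⟨by simpa using hU, hbB⟩, rfl⟩))))))))
      · exact Finset.mem_union.2 (Or.inl (Finset.mem_union.2 (Or.inl (Finset.mem_union.2
          (Or.inr (Finset.mem_image.2 ⟨e, Finset.mem_filter.2 ⟨by simpa using he, hbB⟩, rfl⟩))))))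
      · exact Finset.mem_union.2 (Or.inl (Finset.mem_union.2 (Or.inr
          (Finset.mem_image.2 ⟨e, Finset.mem_filter.2 ⟨by simpa using he, hbB⟩, rfl⟩))))
      · rw [Set.mem_singleton_iff] at hb'
        rw [hb']
        exact Finset.mem_union.2 (Or.inr (Finset.mem_singleton_self _))
    · intro b hb
      rw [hmemBf]
      rcases Finset.mem_union.1 hb with hb | hb
      · rcases Finset.mem_union.1 hb with hb | hb
        · rcases Finset.mem_union.1 hb with hb | hb
          · rcases Finset.mem_union.1 hb with hb | hb
            · obtain ⟨U, hU, rfl⟩ := Finset.mem_image.1 hb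
              exact (Finset.mem_filter.1 hU).2
            · obtain ⟨U, hU, rfl⟩ := Finset.mem_image.1 hb
              exact (Finset.mem_filter.1 hU).2
          · obtain ⟨e, he, rfl⟩ := Finset.mem_image.1 hb
            exact (Finset.mem_filter.1 he).2
        · obtain ⟨e, he, rfl⟩ := Finset.mem_image.1 hb
          exact (Finset.mem_filter.1 he).2
      · rw [Finset.mem_singleton.1 hb]
        exact hS0B (Or.inr (Or.inr rfl))
  -- disjointness of classes
  have hd1 : Disjoint (Lx.image vX) (Ly.image vY) := by
    rw [Finset.disjoint_left]
    rintro a ha hb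
    obtain ⟨U, hU, rfl⟩ := Finset.mem_image.1 ha
    obtain ⟨U', hU', heq⟩ := Finset.mem_image.1 hb
    exact hXYB U U' (Finset.mem_filter.1 hU).2 heq.symm
  have hd2 : Disjoint (Lx.image vX ∪ Ly.image vY) (Exz.image vxz) := by
    rw [Finset.disjoint_left]
    rintro a ha hb
    obtain ⟨e, he, rfl⟩ := Finset.mem_image.1 hb
    rcases Finset.mem_union.1 ha with ha | ha
    · obtain ⟨U, hU, heq⟩ := Finset.mem_image.1 ha
      exact hXne_xz U e heq
    · obtain ⟨U, hU, heq⟩ := Finset.mem_image.1 ha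
      exact hYne_xz U e heq
  have hd3 : Disjoint ((Lx.image vX ∪ Ly.image vY) ∪ Exz.image vxz) (Ezy.image vzy) := by
    rw [Finset.disjoint_left]
    rintro a ha hb
    obtain ⟨e, he, rfl⟩ := Finset.mem_image.1 hb
    rcases Finset.mem_union.1 ha with ha | ha
    · rcases Finset.mem_union.1 ha with ha | ha
      · obtain ⟨U, hU, heq⟩ := Finset.mem_image.1 ha
        exact hXne_zy U e heq
      · obtain ⟨U, hU, heq⟩ := Finset.mem_image.1 ha
        exact hYne_zy U e heq
    · obtain ⟨e', he', heq⟩ := Finset.mem_image.1 ha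
      exact hxz_ne_zy e' e heq
  have hd4 : Disjoint (((Lx.image vX ∪ Ly.image vY) ∪ Exz.image vxz) ∪ Ezy.image vzy)
      ({vZ} : Finset _) := by
    rw [Finset.disjoint_left]
    rintro a ha hb
    rw [Finset.mem_singleton.1 hb] at ha
    rcases Finset.mem_union.1 ha with ha | ha
    · rcases Finset.mem_union.1 ha with ha | ha
      · rcases Finset.mem_union.1 ha with ha | ha
        · obtain ⟨U, hU, heq⟩ := Finset.mem_image.1 ha
          exact hXne_Z U heq
        · obtain ⟨U, hU, heq⟩ := Finset.mem_image.1 ha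
          exact hYne_Z U heq
      · obtain ⟨e, he, heq⟩ := Finset.mem_image.1 ha
        exact hxz_ne_Z e heq
    · obtain ⟨e, he, heq⟩ := Finset.mem_image.1 ha
      exact hzy_ne_Z e heq
  -- cardinalities
  have hcards : Bf.card = Lx.card + Ly.card + Exz.card + Ezy.card + 1 := by
    rw [hBfeq, Finset.card_union_of_disjoint hd4, Finset.card_union_of_disjoint hd3,
      Finset.card_union_of_disjoint hd2, Finset.card_union_of_disjoint hd1,
      Finset.card_image_of_injective _ hvXinj, Finset.card_image_of_injective _ hvYinj,
      Finset.card_image_of_injective _ hvxzinj, Finset.card_image_of_injective _ hvzyinj,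
      Finset.card_singleton]
  have hfr : Module.finrank ℝ ↥Vsub = Bf.card := by
    have h := finrank_span_set_eq_card hBli
    rw [hspanB] at h
    exact h
  have hn : MX.E.card + EZ.card + MY.E.card = Bf.card := by
    rw [← hfr, hVsub, finrank_suppSub]
  -- membership helpers for the final family
  have hmemX : ∀ U : {U // U ∈ Lx}, vX U.1 ∈ B := fun U => (Finset.mem_filter.1 U.2).2
  have hmemY : ∀ U : {U // U ∈ Ly}, vY U.1 ∈ B := fun U => (Finset.mem_filter.1 U.2).2
  have hmemxz : ∀ e : {e // e ∈ Exz}, vxz e.1 ∈ B := fun e => (Finset.mem_filter.1 e.2).2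
  have hmemzy : ∀ e : {e // e ∈ Ezy}, vzy e.1 ∈ B := fun e => (Finset.mem_filter.1 e.2).2
  have hvZB : vZ ∈ B := hS0B (Or.inr (Or.inr rfl))
  refine ⟨Lx, Ly, Exz, Ezy, ?_, ?_, ?_, ?_, ?_, ?_, ?_, ?_, ?_, ?_, ?_, ?_⟩
  · exact ⟨MX.E, Finset.mem_filter.2 ⟨hEXCX, hS0B (Set.mem_insert _ _)⟩⟩
  · exact ⟨MY.E, Finset.mem_filter.2 ⟨hEYCY, hS0B (Or.inr (Set.mem_insert _ _))⟩⟩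
  · intro A hA B' hB'
    exact hCXchain A (Finset.mem_of_mem_filter A hA) B' (Finset.mem_of_mem_filter B' hB')
  · intro A hA B' hB'
    exact hCYchain A (Finset.mem_of_mem_filter A hA) B' (Finset.mem_of_mem_filter B' hB')
  · intro U hU
    exact hFxmem.1 (hCXF (Finset.mem_of_mem_filter U hU))
  · intro U hU
    exact hFymem.1 (hCYF (Finset.mem_of_mem_filter U hU))
  · exact (Finset.filter_subset _ _).trans (Finset.filter_subset _ _)
  · intro e he
    exact (Finset.mem_filter.1 (Finset.mem_of_mem_filter e he)).2
  · exact (Finset.filter_subset _ _).trans (Finset.filter_subset _ _)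
  · intro e he
    exact (Finset.mem_filter.1 (Finset.mem_of_mem_filter e he)).2
  · omega
  · -- linear independence
    set g : ({U // U ∈ Lx} ⊕ ({U // U ∈ Ly} ⊕ ({e // e ∈ Exz} ⊕ ({e // e ∈ Ezy} ⊕ Unit)))) →
        ↥B :=
      Sum.elim (fun U => ⟨vX U.1, hmemX U⟩)
        (Sum.elim (fun U => ⟨vY U.1, hmemY U⟩)
          (Sum.elim (fun e => ⟨vxz e.1, hmemxz e⟩)
            (Sum.elim (fun e => ⟨vzy e.1, hmemzy e⟩)
              (fun _ => ⟨vZ, hvZB⟩)))) with hg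
    have hginj : Function.Injective g := by
      intro i j hij
      have hval := congrArg Subtype.val hij
      rcases i with iX | iY | ixz | izy | iu <;> rcases j with jX | jY | jxz | jzy | ju <;>
        simp only [hg, Sum.elim_inl, Sum.elim_inr] at hval ⊢
      · exact congrArg Sum.inl (Subtype.ext (hvXinj hval))
      · exact absurd hval (hXYB iX.1 jY.1 (hmemX iX))
      · exact absurd hval (hXne_xz iX.1 jxz.1)
      · exact absurd hval (hXne_zy iX.1 jzy.1)
      · exact absurd hval (hXne_Z iX.1)
      · exact absurd hval.symm (hXYB jX.1 iY.1 (hmemX jX))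
      · exact congrArg (Sum.inr ∘ Sum.inl) (Subtype.ext (hvYinj hval))
      · exact absurd hval (hYne_xz iY.1 jxz.1)
      · exact absurd hval (hYne_zy iY.1 jzy.1)
      · exact absurd hval (hYne_Z iY.1)
      · exact absurd hval.symm (hXne_xz jX.1 ixz.1)
      · exact absurd hval.symm (hYne_xz jY.1 ixz.1)
      · exact congrArg (Sum.inr ∘ Sum.inr ∘ Sum.inl) (Subtype.ext (hvxzinj hval))
      · exact absurd hval (hxz_ne_zy ixz.1 jzy.1)
      · exact absurd hval (hxz_ne_Z ixz.1)
      · exact absurd hval.symm (hXne_zy jX.1 izy.1)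
      · exact absurd hval.symm (hYne_zy jY.1 izy.1)
      · exact absurd hval.symm (hxz_ne_zy jxz.1 izy.1)
      · exact congrArg (Sum.inr ∘ Sum.inr ∘ Sum.inr ∘ Sum.inl) (Subtype.ext (hvzyinj hval))
      · exact absurd hval (hzy_ne_Z izy.1)
      · exact absurd hval.symm (hXne_Z jX.1)
      · exact absurd hval.symm (hYne_Z jY.1)
      · exact absurd hval.symm (hxz_ne_Z jxz.1)
      · exact absurd hval.symm (hzy_ne_Z jzy.1)
    have hli2 : LinearIndependent ℝ (Subtype.val ∘ g) := hBli.comp g hginj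
    convert hli2 using 1
    funext i
    rcases i with iX | iY | ixz | izy | iu <;>
      simp only [hg, Sum.elim_inl, Sum.elim_inr, Function.comp_apply, hvX, hvY, hvxz,
        hvzy, hvZ]
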